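/- The homogeneous ideal of the second Veronese embedding of P^n (over a field of characteristic 0, or characteristic ≠ 2,3) is generated by quadrics of rank 3. -/

import Mathlib

open MvPolynomial

set_option maxHeartbeats 1000000
set_option linter.unusedSectionVars false


section
variable {k : Type*} [CommRing k] {ι : Type*} [DecidableEq ι]

def mul2 : Sym2 ι → Multiset ι := Sym2.lift ⟨fun a b => {a, b}, fun a b => Multiset.cons_swap a b 0⟩

@[simp] lemma mul2_mk (a b : ι) : mul2 (s(a,b)) = {a, b} := rfl

def flat (M : Multiset (Sym2 ι)) : Multiset ι := M.bind mul2

@[simp] lemma flat_zero : flat (0 : Multiset (Sym2 ι)) = 0 := rfl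
@[simp] lemma flat_cons (s : Sym2 ι) (M : Multiset (Sym2 ι)) :
    flat (s ::ₘ M) = mul2 s + flat M := Multiset.cons_bind _ _ _

noncomputable def mmono {σ : Type*} (M : Multiset σ) : MvPolynomial σ k := (M.map X).prod

@[simp] lemma mmono_zero {σ : Type*} : (mmono 0 : MvPolynomial σ k) = 1 := rfl
@[simp] lemma mmono_cons {σ : Type*} (s : σ) (M : Multiset σ) :
    (mmono (s ::ₘ M) : MvPolynomial σ k) = X s * mmono M := by
  simp [mmono]
@[simp] lemma mmono_add {σ : Type*} (M N : Multiset σ) :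
    (mmono (M + N) : MvPolynomial σ k) = mmono M * mmono N := by
  simp [mmono]

lemma mmono_toMultiset {σ : Type*} [DecidableEq σ] (m : σ →₀ ℕ) :
    (mmono m.toMultiset : MvPolynomial σ k) = monomial m 1 := by
  induction m using Finsupp.induction with
  | zero => simp [mmono]
  | single_add a n f han hn ih =>
      rw [Finsupp.toMultiset_add, mmono_add, ih, Finsupp.toMultiset_single,
        monomial_single_add]
      congr 1
      show (Multiset.map X (n • {a})).prod = X a ^ n
      rw [Multiset.map_nsmul, Multiset.prod_nsmul]
      simp

end

section
variable {k : Type*} [CommRing k] {ι : Type*} [DecidableEq ι]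

def minorSet (k ι : Type*) [CommRing k] : Set (MvPolynomial (Sym2 ι) k) :=
  {p | ∃ a b c d : ι, p = X s(a,b) * X s(c,d) - X s(a,c) * X s(b,d)}

lemma mem_mul2 {a : ι} {s : Sym2 ι} (h : a ∈ mul2 s) : ∃ c, s = s(a, c) := by
  induction s using Sym2.ind with
  | _ x y =>
    simp only [mul2_mk, Multiset.insert_eq_cons, Multiset.mem_cons, Multiset.mem_singleton] at h
    rcases h with h | h
    · exact ⟨y, by rw [h]⟩
    · exact ⟨x, by rw [h, Sym2.eq_swap]⟩

lemma swap_lemma (N : ℕ) :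
    ∀ P Q : Multiset (Sym2 ι), P.card = N → flat P = flat Q →
      (mmono P - mmono Q : MvPolynomial (Sym2 ι) k) ∈ Ideal.span (minorSet k ι) := by
  induction N with
  | zero =>
      intro P Q hc hf
      rw [Multiset.card_eq_zero] at hc
      subst hc
      have : Q = 0 := by
        by_contra h
        obtain ⟨s, hs⟩ := Multiset.exists_mem_of_ne_zero h
        induction s using Sym2.ind with
        | _ x y =>
          have : x ∈ flat Q := by
            rw [flat, Multiset.mem_bind]; exact ⟨_, hs, by simp⟩
          rw [← hf] at this; simp at this
      subst this; simp
  | succ N ih =>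
      intro P Q hc hf
      -- Q is nonempty
      have hQne : Q ≠ 0 := by
        intro h; subst h
        have hPne : P ≠ 0 := by intro h0; rw [h0] at hc; simp at hc
        obtain ⟨s, hs⟩ := Multiset.exists_mem_of_ne_zero hPne
        obtain ⟨x, y, rfl⟩ : ∃ x y, s = s(x, y) := ⟨s.out.1, s.out.2, (Quot.out_eq s).symm⟩
        have hx : x ∈ flat P := by rw [flat, Multiset.mem_bind]; exact ⟨_, hs, by simp⟩
        rw [hf] at hx; simp at hx
      obtain ⟨s, hs⟩ := Multiset.exists_mem_of_ne_zero hQne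
      obtain ⟨a, b, rfl⟩ : ∃ a b, s = s(a,b) := ⟨s.out.1, s.out.2, (Quot.out_eq s).symm⟩
      obtain ⟨Q', rfl⟩ := Multiset.exists_cons_of_mem hs
      have haP : a ∈ flat P := by
        rw [hf, flat_cons]; simp
      rw [flat, Multiset.mem_bind] at haP
      obtain ⟨t, htP, hat⟩ := haP
      obtain ⟨c, rfl⟩ := mem_mul2 hat
      obtain ⟨P', rfl⟩ := Multiset.exists_cons_of_mem htP
      rw [flat_cons, flat_cons, mul2_mk, mul2_mk] at hf
      have hf' : c ::ₘ flat P' = b ::ₘ flat Q' := by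
        have : a ::ₘ c ::ₘ flat P' = a ::ₘ b ::ₘ flat Q' := by
          simpa [Multiset.insert_eq_cons] using hf
        exact (Multiset.cons_inj_right _).1 this
      by_cases hcb : c = b
      · subst hcb
        have hrec := ih P' Q' (by simpa using hc) ((Multiset.cons_inj_right _).1 hf')
        have : (mmono (s(a,c) ::ₘ P') - mmono (s(a,c) ::ₘ Q') : MvPolynomial (Sym2 ι) k)
            = X s(a,c) * (mmono P' - mmono Q') := by
          simp [mul_sub]
        rw [this]
        exact Ideal.mul_mem_left _ _ hrec
      · have hbP' : b ∈ flat P' := by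
          have : b ∈ c ::ₘ flat P' := by rw [hf']; simp
          rcases Multiset.mem_cons.1 this with h | h
          · exact absurd h.symm hcb
          · exact h
        rw [flat, Multiset.mem_bind] at hbP'
        obtain ⟨t', ht'P, hbt'⟩ := hbP'
        obtain ⟨d, rfl⟩ := mem_mul2 hbt'
        obtain ⟨P'', rfl⟩ := Multiset.exists_cons_of_mem ht'P
        -- swap step
        have hswap : (mmono (s(a,c) ::ₘ s(b,d) ::ₘ P'') - mmono (s(a,b) ::ₘ s(c,d) ::ₘ P'')
            : MvPolynomial (Sym2 ι) k) ∈ Ideal.span (minorSet k ι) := by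
          have : (mmono (s(a,c) ::ₘ s(b,d) ::ₘ P'') - mmono (s(a,b) ::ₘ s(c,d) ::ₘ P'')
              : MvPolynomial (Sym2 ι) k)
              = (X s(a,c) * X s(b,d) - X s(a,b) * X s(c,d)) * mmono P'' := by
            simp; ring
          rw [this]
          exact Ideal.mul_mem_right _ _ (Ideal.subset_span ⟨a, c, b, d, by ring⟩)
        -- recurse
        have hfr : flat (s(c,d) ::ₘ P'') = flat Q' := by
          have : c ::ₘ flat (s(b,d) ::ₘ P'') = b ::ₘ flat Q' := hf'
          rw [flat_cons, mul2_mk] at this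
          have h2 : c ::ₘ b ::ₘ d ::ₘ flat P'' = b ::ₘ flat Q' := by
            simpa [Multiset.insert_eq_cons] using this
          rw [flat_cons, mul2_mk]
          have h3 : b ::ₘ c ::ₘ d ::ₘ flat P'' = b ::ₘ flat Q' := by
            rw [← h2, Multiset.cons_swap]
          simpa [Multiset.insert_eq_cons] using (Multiset.cons_inj_right _).1 h3
        have hrec := ih (s(c,d) ::ₘ P'') Q' (by simpa using hc) hfr
        have key : (mmono (s(a,c) ::ₘ s(b,d) ::ₘ P'') - mmono (s(a,b) ::ₘ Q')
            : MvPolynomial (Sym2 ι) k)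
            = (mmono (s(a,c) ::ₘ s(b,d) ::ₘ P'') - mmono (s(a,b) ::ₘ s(c,d) ::ₘ P''))
              + X s(a,b) * (mmono (s(c,d) ::ₘ P'') - mmono Q') := by
          simp; ring
        rw [key]
        exact Ideal.add_mem _ hswap (Ideal.mul_mem_left _ _ hrec)
end

section
variable {k : Type*} [CommRing k] {ι : Type*} [LinearOrder ι]

def canonList : List ι → Multiset (Sym2 ι)
  | a :: b :: t => s(a, b) ::ₘ canonList t
  | _ => 0

lemma flat_canonList : ∀ l : List ι, Even l.length → flat (canonList l) = ↑l
  | [] => by intro _; simp [canonList]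
  | [a] => by intro h; simp at h
  | a :: b :: t => by
      intro h
      have ht : Even t.length := by
        simpa [Nat.even_add_one, parity_simps] using h
      rw [canonList, flat_cons, mul2_mk, flat_canonList t ht]
      simp [Multiset.insert_eq_cons]

def canon (F : Multiset ι) : Multiset (Sym2 ι) := canonList (F.sort (· ≤ ·))

lemma even_card_flat (M : Multiset (Sym2 ι)) : Even (Multiset.card (flat M)) := by
  induction M using Multiset.induction with
  | empty => simp
  | cons s M ih =>
      rw [flat_cons]
      have : Multiset.card (mul2 s) = 2 := by
        induction s using Sym2.ind with
        | _ x y => simp [Multiset.insert_eq_cons]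
      rw [Multiset.card_add, this]
      exact (even_two).add ih

lemma flat_canon (M : Multiset (Sym2 ι)) : flat (canon (flat M)) = flat M := by
  rw [canon, flat_canonList _ (by rw [Multiset.length_sort]; exact even_card_flat M),
    Multiset.sort_eq]

end

section
variable {k : Type*} [CommRing k] {ι : Type*} [LinearOrder ι]

noncomputable def ver (k ι : Type*) [CommRing k] : MvPolynomial (Sym2 ι) k →+* MvPolynomial ι k :=
  (aeval (fun s : Sym2 ι =>
    Sym2.lift ⟨fun i j => X i * X j, fun i j => mul_comm _ _⟩ s)).toRingHom

@[simp] lemma ver_X (i j : ι) : ver k ι (X s(i,j)) = X i * X j := by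
  simp [ver]

lemma ver_C (c : k) : ver k ι (C c) = C c := by simp [ver]

lemma ver_mmono (M : Multiset (Sym2 ι)) : ver k ι (mmono M) = mmono (flat M) := by
  induction M using Multiset.induction with
  | empty => simp [mmono]
  | cons s M ih =>
      induction s using Sym2.ind with
      | _ x y =>
          rw [mmono_cons, map_mul, ih, ver_X, flat_cons, mul2_mk, mmono_add]
          congr 1
          simp [mmono, Multiset.insert_eq_cons]

lemma mmono_eq_monomial {σ : Type*} [DecidableEq σ] (F : Multiset σ) :
    (mmono F : MvPolynomial σ k) = monomial F.toFinsupp 1 := by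
  conv_lhs => rw [← Multiset.toFinsupp_toMultiset F]
  exact mmono_toMultiset _

noncomputable def normT : MvPolynomial ι k → MvPolynomial (Sym2 ι) k :=
  AddMonoidAlgebra.mapDomain (fun e : ι →₀ ℕ => (canon e.toMultiset).toFinsupp)

lemma ver_monomial (m : Sym2 ι →₀ ℕ) (c : k) :
    ver k ι (monomial m c) = monomial (flat m.toMultiset).toFinsupp c := by
  have h1 : monomial m c = C c * monomial m (1 : k) := by
    rw [C_mul_monomial, mul_one]
  have h2 : (monomial (flat m.toMultiset).toFinsupp c : MvPolynomial ι k)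
      = C c * monomial (flat m.toMultiset).toFinsupp (1 : k) := by
    rw [C_mul_monomial, mul_one]
  rw [h1, h2, map_mul, ver_C, ← mmono_toMultiset, ver_mmono, mmono_eq_monomial]

lemma normT_monomial (e : ι →₀ ℕ) (c : k) :
    normT (monomial e c) = monomial (canon e.toMultiset).toFinsupp c := by
  rw [← single_eq_monomial, ← single_eq_monomial, normT, AddMonoidAlgebra.mapDomain_single]

lemma sub_normT_mem (p : MvPolynomial (Sym2 ι) k) :
    p - normT (ver k ι p) ∈ Ideal.span (minorSet k ι) := by
  induction p using MvPolynomial.induction_on' with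
  | monomial m c =>
      rw [ver_monomial, normT_monomial, Multiset.toFinsupp_toMultiset]
      have hm : (monomial m c : MvPolynomial (Sym2 ι) k) = C c * mmono m.toMultiset := by
        rw [mmono_toMultiset, C_mul_monomial, mul_one]
      have hc : (monomial (canon (flat m.toMultiset)).toFinsupp c : MvPolynomial (Sym2 ι) k)
          = C c * mmono (canon (flat m.toMultiset)) := by
        rw [mmono_eq_monomial, C_mul_monomial, mul_one]
      rw [hm, hc, ← mul_sub]
      exact Ideal.mul_mem_left _ _
        (swap_lemma (Multiset.card m.toMultiset) _ _ rfl (flat_canon _).symm)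
  | add p q hp hq =>
      rw [map_add]
      have : p + q - normT (ver k ι p + ver k ι q)
          = (p - normT (ver k ι p)) + (q - normT (ver k ι q)) := by
        rw [normT, AddMonoidAlgebra.mapDomain_add]; ring
      rw [this]
      exact Ideal.add_mem _ hp hq

lemma ker_le_span_minorSet :
    RingHom.ker (ver k ι) ≤ Ideal.span (minorSet k ι) := by
  intro p hp
  have h := sub_normT_mem (k := k) p
  rw [RingHom.mem_ker] at hp
  rw [hp] at h
  have h0 : normT (0 : MvPolynomial ι k) = 0 := AddMonoidAlgebra.mapDomain_zero _
  rw [h0, sub_zero] at h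
  exact h

end

section
variable {k : Type*} [CommRing k] {ι : Type*} [Fintype ι] [LinearOrder ι]

noncomputable def Bz (u v : ι → k) : MvPolynomial (Sym2 ι) k :=
  ∑ i, ∑ j, C (u i * v j) * X s(i,j)

lemma Bz_symm (u v : ι → k) : Bz u v = Bz v u := by
  rw [Bz, Finset.sum_comm]
  exact Finset.sum_congr rfl fun i _ => Finset.sum_congr rfl fun j _ => by
    rw [mul_comm (v i) (u j), Sym2.eq_swap]

lemma Bz_zero_left (v : ι → k) : Bz 0 v = 0 := by simp [Bz]

lemma Bz_add_left (u u' v : ι → k) : Bz (u + u') v = Bz u v + Bz u' v := by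
  simp [Bz, add_mul, Finset.sum_add_distrib]

lemma Bz_smul_left (c : k) (u v : ι → k) : Bz (c • u) v = C c * Bz u v := by
  simp only [Bz, Finset.mul_sum, Pi.smul_apply, smul_eq_mul]
  exact Finset.sum_congr rfl fun i _ => Finset.sum_congr rfl fun j _ => by
    rw [mul_assoc, C_mul, mul_assoc]

lemma Bz_isHomogeneous (u v : ι → k) : (Bz u v).IsHomogeneous 1 := by
  apply IsHomogeneous.sum
  intro i _
  apply IsHomogeneous.sum
  intro j _
  simpa using (isHomogeneous_X k (s(i,j) : Sym2 ι)).C_mul (u i * v j)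

lemma eval_Bz (u v : ι → k) (y : Sym2 ι → k) :
    eval y (Bz u v) = ∑ i, ∑ j, u i * v j * y s(i,j) := by
  simp [Bz]

lemma eval_Bz_add (u v : ι → k) (y z : Sym2 ι → k) :
    eval (y + z) (Bz u v) = eval y (Bz u v) + eval z (Bz u v) := by
  simp [eval_Bz, mul_add, Finset.sum_add_distrib]

def pt (w w' : ι → k) : Sym2 ι → k :=
  fun s => Sym2.lift ⟨fun i j => w i * w' j + w j * w' i, fun i j => by ring⟩ s

lemma eval_Bz_pt (u v w w' : ι → k) :
    eval (pt w w') (Bz u v)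
      = (∑ i, u i * w i) * (∑ j, v j * w' j) + (∑ i, u i * w' i) * (∑ j, v j * w j) := by
  rw [eval_Bz, Finset.sum_mul_sum, Finset.sum_mul_sum, ← Finset.sum_add_distrib]
  refine Finset.sum_congr rfl fun i _ => ?_
  rw [← Finset.sum_add_distrib]
  refine Finset.sum_congr rfl fun j _ => ?_
  simp only [pt, Sym2.lift_mk]
  ring

noncomputable def qS (u v : ι → k) : MvPolynomial (Sym2 ι) k :=
  Bz u u * Bz v v - Bz u v ^ 2

lemma qS_isHomogeneous (u v : ι → k) : (qS u v).IsHomogeneous 2 := by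
  have h1 := (Bz_isHomogeneous u u).mul (Bz_isHomogeneous v v)
  have h2 := (Bz_isHomogeneous u v).pow 2
  exact h1.sub h2

lemma ver_Bz (u v : ι → k) :
    ver k ι (Bz u v) = (∑ i, C (u i) * X i) * (∑ j, C (v j) * X j) := by
  rw [Finset.sum_mul_sum, Bz, map_sum]
  refine Finset.sum_congr rfl fun i _ => ?_
  rw [map_sum]
  refine Finset.sum_congr rfl fun j _ => ?_
  rw [map_mul, ver_C, ver_X]
  rw [C_mul]
  ring

lemma ver_qS (u v : ι → k) : ver k ι (qS u v) = 0 := by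
  rw [qS, map_sub, map_mul, map_pow, ver_Bz, ver_Bz, ver_Bz]
  ring

end

section
variable {k : Type*} [CommRing k] {σ : Type*} [Fintype σ] [DecidableEq σ]

lemma degree_one_single {m : σ →₀ ℕ} (h : m.degree = 1) : ∃ s, m = Finsupp.single s 1 := by
  have hne : m ≠ 0 := by
    intro h0; rw [h0, map_zero] at h; exact one_ne_zero h.symm
  obtain ⟨s, hs⟩ := Finsupp.support_nonempty_iff.2 hne
  have hcard : m.support.card ≤ 1 := by
    have : m.support.card = ∑ t ∈ m.support, 1 := by simp
    calc m.support.card = ∑ t ∈ m.support, 1 := by simp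
      _ ≤ ∑ t ∈ m.support, m t := Finset.sum_le_sum fun t ht =>
          Nat.one_le_iff_ne_zero.2 (Finsupp.mem_support_iff.1 ht)
      _ = 1 := h
  have hsupp : m.support = {s} := by
    apply Finset.eq_singleton_iff_unique_mem.2
    refine ⟨hs, fun t ht => ?_⟩
    by_contra hts
    have : ({t, s} : Finset σ) ⊆ m.support := by
      intro x hx
      simp only [Finset.mem_insert, Finset.mem_singleton] at hx
      rcases hx with rfl | rfl <;> assumption
    have h2 := Finset.card_le_card this
    rw [Finset.card_insert_of_notMem (by simpa using hts), Finset.card_singleton] at h2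
    omega
  obtain ⟨hne', heq⟩ := Finsupp.support_eq_singleton.1 hsupp
  refine ⟨s, ?_⟩
  have hms : m s = 1 := by
    have : m.degree = m s := by rw [Finsupp.degree_apply, hsupp, Finset.sum_singleton]
    omega
  rw [heq, hms]

lemma homog1_repr {l : MvPolynomial σ k} (h : l.IsHomogeneous 1) :
    l = ∑ s : σ, C (coeff (Finsupp.single s 1) l) * X s := by
  apply MvPolynomial.ext
  intro m
  rw [coeff_sum]
  simp only [coeff_C_mul, coeff_X']
  by_cases hm : ∃ s, m = Finsupp.single s 1
  · obtain ⟨s0, rfl⟩ := hm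
    have hrw : ∀ s : σ, (if (Finsupp.single s 1 : σ →₀ ℕ) = Finsupp.single s0 1 then (1:k) else 0)
        = if s = s0 then 1 else 0 := by
      intro s
      by_cases hss : s = s0
      · subst hss; simp
      · rw [if_neg hss, if_neg]
        intro hc
        exact hss ((Finsupp.single_left_inj one_ne_zero).1 hc)
    simp_rw [hrw, mul_ite, mul_one, mul_zero]
    simp
  · have h0 : coeff m l = 0 := by
      apply h.coeff_eq_zero
      intro hdeg
      exact hm (degree_one_single hdeg)
    rw [h0]
    symm
    apply Finset.sum_eq_zero
    intro s _
    rw [if_neg, mul_zero]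
    intro hc
    exact hm ⟨s, hc.symm⟩

lemma eval_add_of_homog1 {l : MvPolynomial σ k} (h : l.IsHomogeneous 1) (y z : σ → k) :
    eval (y + z) l = eval y l + eval z l := by
  rw [homog1_repr h]
  simp [mul_add, Finset.sum_add_distrib]

end

section
variable {k : Type*} [Field k] {ι : Type*} [Fintype ι] [DecidableEq ι]

lemma exists_dual_pair {u v : ι → k} (h : LinearIndependent k ![u, v]) :
    ∃ w w' : ι → k, (∑ i, u i * w i) = 1 ∧ (∑ i, v i * w i) = 0 ∧
      (∑ i, u i * w' i) = 0 ∧ (∑ i, v i * w' i) = 1 := by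
  classical
  have hs : LinearIndepOn k id (Set.range ![u, v]) := h.linearIndepOn_id
  let B := Module.Basis.extend hs
  have hsub : Set.range ![u, v] ⊆ hs.extend (Set.subset_univ _) :=
    hs.subset_extend _
  have hu : u ∈ hs.extend (Set.subset_univ _) := hsub ⟨0, rfl⟩
  have hv : v ∈ hs.extend (Set.subset_univ _) := hsub ⟨1, rfl⟩
  have huv : u ≠ v := by
    intro he
    have := h.injective
    have h01 := this.ne (show (0 : Fin 2) ≠ 1 by decide)
    simp [he] at h01
  have keyfun : ∀ (x0 : ι → k) (hx : x0 ∈ hs.extend (Set.subset_univ _)) (x1 : ι → k)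
      (hx1 : x1 ∈ hs.extend (Set.subset_univ _)) (hne : x0 ≠ x1),
      ∃ w : ι → k, (∑ i, x0 i * w i) = 1 ∧ (∑ i, x1 i * w i) = 0 := by
    intro x0 hx x1 hx1 hne
    let f := B.coord ⟨x0, hx⟩
    refine ⟨fun i => f (fun j => if i = j then 1 else 0), ?_, ?_⟩
    · have : (∑ i, x0 i * f (fun j => if i = j then 1 else 0)) = f x0 := by
        conv_rhs => rw [pi_eq_sum_univ x0]
        rw [map_sum]
        exact Finset.sum_congr rfl fun i _ => by rw [map_smul, smul_eq_mul]
      rw [this]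
      have hB : B ⟨x0, hx⟩ = x0 := Module.Basis.extend_apply_self hs ⟨x0, hx⟩
      have hrep : B.repr x0 = Finsupp.single ⟨x0, hx⟩ 1 := by
        have h' := B.repr_self (⟨x0, hx⟩ : hs.extend (Set.subset_univ _))
        rwa [hB] at h'
      rw [show f x0 = B.repr x0 ⟨x0, hx⟩ from B.coord_apply _ _, hrep]
      simp
    · have : (∑ i, x1 i * f (fun j => if i = j then 1 else 0)) = f x1 := by
        conv_rhs => rw [pi_eq_sum_univ x1]
        rw [map_sum]
        exact Finset.sum_congr rfl fun i _ => by rw [map_smul, smul_eq_mul]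
      rw [this]
      have hB : B ⟨x1, hx1⟩ = x1 := Module.Basis.extend_apply_self hs ⟨x1, hx1⟩
      have hrep : B.repr x1 = Finsupp.single ⟨x1, hx1⟩ 1 := by
        have h' := B.repr_self (⟨x1, hx1⟩ : hs.extend (Set.subset_univ _))
        rwa [hB] at h'
      rw [show f x1 = B.repr x1 ⟨x0, hx⟩ from B.coord_apply _ _, hrep,
        Finsupp.single_apply, if_neg]
      intro hc
      exact hne (congrArg Subtype.val hc).symm
  obtain ⟨w, hw1, hw2⟩ := keyfun u hu v hv huv
  obtain ⟨w', hw1', hw2'⟩ := keyfun v hv u hu (Ne.symm huv)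
  exact ⟨w, w', hw1, hw2, hw2', hw1'⟩

end

section
variable {k : Type*} [CommRing k] {ι : Type*} [Fintype ι] [LinearOrder ι]

lemma Bz_add_right (u v v' : ι → k) : Bz u (v + v') = Bz u v + Bz u v' := by
  simp [Bz, mul_add, add_mul, Finset.sum_add_distrib]

lemma Bz_single (x y : ι) :
    Bz (Pi.single x (1:k)) (Pi.single y (1:k)) = X s(x,y) := by
  rw [Bz]
  rw [Finset.sum_eq_single x]
  · rw [Finset.sum_eq_single y]
    · simp
    · intro j _ hj
      simp [Pi.single_apply, if_neg hj]
    · intro h; exact absurd (Finset.mem_univ y) h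
  · intro i _ hi
    apply Finset.sum_eq_zero
    intro j _
    simp [Pi.single_apply, if_neg hi]
  · intro h; exact absurd (Finset.mem_univ x) h

end


namespace Stmt13

variable {k : Type*} [Field k]

/-- A quadric has rank at most `m` if it is a linear combination of `m` squares of linear
forms (over a field of characteristic `≠ 2` this agrees with the rank of the Gram
matrix). -/
def RankLE {ι : Type*} (m : ℕ) (q : MvPolynomial ι k) : Prop :=
  ∃ (c : Fin m → k) (l : Fin m → MvPolynomial ι k),
    (∀ i, (l i).IsHomogeneous 1) ∧ q = ∑ i, c i • (l i) ^ 2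

/-- A quadric of rank exactly `3`. -/
def RankThree {ι : Type*} (q : MvPolynomial ι k) : Prop :=
  RankLE 3 q ∧ ¬ RankLE 2 q

/-- The second Veronese map on coordinate rings: the algebra map sending the variable
`z_{ij}` (indexed by the unordered pair `{i,j}`) to `x_i x_j`. -/
noncomputable def veronese (n : ℕ) :
    MvPolynomial (Sym2 (Fin (n + 1))) k →+* MvPolynomial (Fin (n + 1)) k :=
  (aeval (fun s : Sym2 (Fin (n + 1)) =>
    Sym2.lift ⟨fun i j => X i * X j, fun i j => mul_comm _ _⟩ s)).toRingHom

section
variable {ι : Type*} [Fintype ι] [LinearOrder ι]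

lemma rankLE3_qS (h2 : (2:k) ≠ 0) (u v : ι → k) : RankLE 3 (qS u v) := by
  have h4 : (4:k) ≠ 0 := by
    have h : (4:k) = 2*2 := by norm_num
    rw [h]; exact mul_ne_zero h2 h2
  refine ⟨![(4:k)⁻¹, -(4:k)⁻¹, -1], ![Bz u u + Bz v v, Bz u u - Bz v v, Bz u v], ?_, ?_⟩
  · intro i; fin_cases i
    · exact (Bz_isHomogeneous u u).add (Bz_isHomogeneous v v)
    · exact (Bz_isHomogeneous u u).sub (Bz_isHomogeneous v v)
    · exact Bz_isHomogeneous u v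
  · rw [qS, Fin.sum_univ_three]
    simp only [Matrix.cons_val_zero, Matrix.cons_val_one, Matrix.head_cons,
      Matrix.cons_val_two, Matrix.tail_cons]
    rw [MvPolynomial.smul_eq_C_mul, MvPolynomial.smul_eq_C_mul, MvPolynomial.smul_eq_C_mul]
    have hC4 : (C (4:k) : MvPolynomial (Sym2 ι) k) = 4 := by
      rw [show (4:k) = ((4:ℕ):k) by norm_num, show (4 : MvPolynomial (Sym2 ι) k) = ((4:ℕ) : MvPolynomial (Sym2 ι) k) by norm_num]
      exact C_eq_coe_nat 4
    have h : (C ((4:k)⁻¹) : MvPolynomial (Sym2 ι) k) * 4 = 1 := by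
      rw [← hC4, ← C_mul, inv_mul_cancel₀ h4, C_1]
    rw [map_neg, map_neg, C_1]
    linear_combination (-(Bz u u * Bz v v)) * h

lemma notRankLE2_qS (h2 : (2:k) ≠ 0) {u v : ι → k} (hI : LinearIndependent k ![u, v]) :
    ¬ RankLE 2 (qS u v) := by
  rintro ⟨c, l, hl, hq⟩
  have h4 : (4:k) ≠ 0 := by
    have h : (4:k) = 2*2 := by norm_num
    rw [h]; exact mul_ne_zero h2 h2
  obtain ⟨w, w', huw, hvw, huw', hvw'⟩ := exists_dual_pair hI
  set y : Fin 3 → (Sym2 ι → k) := ![pt w w, pt w' w', pt w w'] with hy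
  have hA : ∀ a : Fin 3, eval (y a) (Bz u u) = ![2,0,0] a := by
    intro a; fin_cases a <;>
      simp [hy, eval_Bz_pt, huw, hvw, huw', hvw', Matrix.cons_val_zero, Matrix.cons_val_one, Matrix.head_cons, Matrix.cons_val_succ, Matrix.vecHead, Matrix.vecTail] <;> ring
  have hB : ∀ a : Fin 3, eval (y a) (Bz v v) = ![0,2,0] a := by
    intro a; fin_cases a <;>
      simp [hy, eval_Bz_pt, huw, hvw, huw', hvw', Matrix.cons_val_zero, Matrix.cons_val_one, Matrix.head_cons, Matrix.cons_val_succ, Matrix.vecHead, Matrix.vecTail] <;> ring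
  have hC : ∀ a : Fin 3, eval (y a) (Bz u v) = ![0,0,1] a := by
    intro a; fin_cases a <;>
      simp [hy, eval_Bz_pt, huw, hvw, huw', hvw', Matrix.cons_val_zero, Matrix.cons_val_one, Matrix.head_cons, Matrix.cons_val_succ, Matrix.vecHead, Matrix.vecTail] <;> ring
  set M : Fin 3 → Fin 3 → k := ![![0,4,0],![4,0,0],![0,0,-2]] with hM
  have hpol : ∀ a b : Fin 3,
      eval (y a + y b) (qS u v) - eval (y a) (qS u v) - eval (y b) (qS u v) = M a b := by
    intro a b
    rw [qS]
    simp only [map_sub, map_mul, map_pow, eval_Bz_add]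
    rw [hA a, hA b, hB a, hB b, hC a, hC b]
    fin_cases a <;> fin_cases b <;>
      norm_num [hM, Matrix.cons_val_zero, Matrix.cons_val_one, Matrix.head_cons, Matrix.cons_val_succ, Matrix.vecHead, Matrix.vecTail] <;> ring
  set p : Fin 2 → Fin 3 → k := fun i a => eval (y a) (l i) with hp
  have hpol2 : ∀ a b : Fin 3,
      eval (y a + y b) (qS u v) - eval (y a) (qS u v) - eval (y b) (qS u v)
        = ∑ i : Fin 2, 2 * c i * p i a * p i b := by
    intro a b
    rw [hq]
    simp only [map_sum, MvPolynomial.smul_eq_C_mul, map_mul, map_pow, eval_C]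
    rw [← Finset.sum_sub_distrib, ← Finset.sum_sub_distrib]
    refine Finset.sum_congr rfl fun i _ => ?_
    rw [eval_add_of_homog1 (hl i)]
    simp only [hp]
    ring
  have hMp : ∀ a b : Fin 3, M a b = ∑ i : Fin 2, 2 * c i * p i a * p i b := by
    intro a b; rw [← hpol a b, hpol2 a b]
  have hnli : ¬ LinearIndependent k (fun a : Fin 3 => fun i : Fin 2 => p i a) := by
    intro hli
    have hle := hli.fintype_card_le_finrank
    have : Module.finrank k (Fin 2 → k) = 2 := by simp
    rw [this] at hle
    simp at hle
  obtain ⟨g, hgsum, a0, hga0⟩ := Fintype.not_linearIndependent_iff.1 hnli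
  have hrel : ∀ i : Fin 2, ∑ a, g a * p i a = 0 := by
    intro i
    have := congrFun hgsum i
    simpa [Finset.sum_apply] using this
  have hzero : ∀ b : Fin 3, ∑ a, g a * M a b = 0 := by
    intro b
    have : ∑ a, g a * M a b = ∑ i : Fin 2, 2 * c i * (∑ a, g a * p i a) * p i b := by
      simp_rw [hMp, Finset.mul_sum]
      rw [Finset.sum_comm]
      refine Finset.sum_congr rfl fun i _ => ?_
      simp only [Finset.mul_sum, Finset.sum_mul]
      refine Finset.sum_congr rfl fun a _ => by ring
    rw [this]
    apply Finset.sum_eq_zero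
    intro i _
    rw [hrel i, mul_zero, zero_mul]
  have hg1 : g 1 = 0 := by
    have h := hzero 0
    rw [Fin.sum_univ_three] at h
    simp [hM, Matrix.cons_val_zero, Matrix.cons_val_one, Matrix.head_cons, Matrix.cons_val_succ, Matrix.vecHead, Matrix.vecTail] at h
    rcases h with h | h
    · exact h
    · exact absurd h h4
  have hg0 : g 0 = 0 := by
    have h := hzero 1
    rw [Fin.sum_univ_three] at h
    simp [hM, Matrix.cons_val_zero, Matrix.cons_val_one, Matrix.head_cons, Matrix.cons_val_succ, Matrix.vecHead, Matrix.vecTail] at h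
    rcases h with h | h
    · exact h
    · exact absurd h h4
  have hg2 : g 2 = 0 := by
    have h := hzero 2
    rw [Fin.sum_univ_three] at h
    simp [hM, Matrix.cons_val_zero, Matrix.cons_val_one, Matrix.head_cons, Matrix.cons_val_succ, Matrix.vecHead, Matrix.vecTail] at h
    rcases h with h | h
    · exact h
    · exact absurd h h2
  fin_cases a0 <;> simp_all

end

lemma veronese_eq (n : ℕ) : veronese (k := k) n = ver k (Fin (n+1)) := rfl

lemma qS_mem_span (h2 : (2:k) ≠ 0) (n : ℕ) (u v : Fin (n+1) → k) :
    qS u v ∈ Ideal.span {q : MvPolynomial (Sym2 (Fin (n + 1))) k |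
      q.IsHomogeneous 2 ∧ q ∈ RingHom.ker (veronese (k := k) n) ∧ RankThree q} := by
  by_cases hLI : LinearIndependent k ![u, v]
  · refine Ideal.subset_span ⟨qS_isHomogeneous u v, ?_, rankLE3_qS h2 u v,
      notRankLE2_qS h2 hLI⟩
    rw [RingHom.mem_ker, veronese_eq]
    exact ver_qS u v
  · have h0 : qS u v = 0 := by
      rw [LinearIndependent.pair_iff] at hLI
      push_neg at hLI
      obtain ⟨s, t, hst, hne⟩ := hLI
      by_cases ht : t = 0
      · subst ht
        have hs : s ≠ 0 := by
          intro h0; exact (hne h0) rfl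
        have hu : u = 0 := by
          have : s • u = 0 := by simpa using hst
          exact (smul_eq_zero.1 this).resolve_left hs
        rw [hu, qS, Bz_zero_left, Bz_zero_left]
        ring
      · have hv : v = (-(t⁻¹ * s)) • u := by
          have hst' : t • v + s • u = 0 := by
            calc t • v + s • u = s • u + t • v := add_comm _ _
              _ = 0 := hst
          have : t • v = -(s • u) := eq_neg_of_add_eq_zero_left hst'
          have h2' : v = t⁻¹ • (t • v) := by
            rw [smul_smul, inv_mul_cancel₀ ht, one_smul]
          rw [h2', this, smul_neg, smul_smul, neg_smul]
        set cc : k := -(t⁻¹ * s)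
        have hBr : ∀ w : Fin (n+1) → k, Bz w (cc • u) = C cc * Bz w u := fun w => by
          rw [Bz_symm, Bz_smul_left, Bz_symm u w]
        rw [qS, hv, hBr, Bz_smul_left, hBr]
        ring
    rw [h0]
    exact Ideal.zero_mem _

lemma minor_mem_ideal (h2 : (2:k) ≠ 0) (h3 : (3:k) ≠ 0) {ι : Type*} [Fintype ι]
    [LinearOrder ι] (J : Ideal (MvPolynomial (Sym2 ι) k))
    (hq : ∀ u v : ι → k, qS u v ∈ J) (a b c d : ι) :
    (X s(a,b) * X s(c,d) - X s(a,c) * X s(b,d) : MvPolynomial (Sym2 ι) k) ∈ J := by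
  have h6 : (6:k) ≠ 0 := by
    have h : (6:k) = 2*3 := by norm_num
    rw [h]; exact mul_ne_zero h2 h3
  let E : ι → (ι → k) := fun x => Pi.single x 1
  have hmem : (qS (E a + E b) (E c + E d) - qS (E a + E b) (E c) - qS (E a + E b) (E d)
      - qS (E a) (E c + E d) + qS (E a) (E c) + qS (E a) (E d)
      - qS (E b) (E c + E d) + qS (E b) (E c) + qS (E b) (E d))
      - (qS (E a + E c) (E b + E d) - qS (E a + E c) (E b) - qS (E a + E c) (E d)
      - qS (E a) (E b + E d) + qS (E a) (E b) + qS (E a) (E d)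
      - qS (E c) (E b + E d) + qS (E c) (E b) + qS (E c) (E d)) ∈ J := by
    refine Ideal.sub_mem _ ?_ ?_ <;>
      exact Ideal.add_mem _ (Ideal.add_mem _ (Ideal.sub_mem _ (Ideal.add_mem _ (Ideal.add_mem _
        (Ideal.sub_mem _ (Ideal.sub_mem _ (Ideal.sub_mem _ (hq _ _) (hq _ _)) (hq _ _))
        (hq _ _)) (hq _ _)) (hq _ _)) (hq _ _)) (hq _ _)) (hq _ _)
  have hC6 : (C (6:k) : MvPolynomial (Sym2 ι) k) = 6 := by
    rw [show (6:k) = ((6:ℕ):k) by norm_num,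
      show (6 : MvPolynomial (Sym2 ι) k) = ((6:ℕ) : MvPolynomial (Sym2 ι) k) by norm_num]
    exact C_eq_coe_nat 6
  have hkey : (qS (E a + E b) (E c + E d) - qS (E a + E b) (E c) - qS (E a + E b) (E d)
      - qS (E a) (E c + E d) + qS (E a) (E c) + qS (E a) (E d)
      - qS (E b) (E c + E d) + qS (E b) (E c) + qS (E b) (E d))
      - (qS (E a + E c) (E b + E d) - qS (E a + E c) (E b) - qS (E a + E c) (E d)
      - qS (E a) (E b + E d) + qS (E a) (E b) + qS (E a) (E d)
      - qS (E c) (E b + E d) + qS (E c) (E b) + qS (E c) (E d))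
      = C (6:k) * (X s(a,b) * X s(c,d) - X s(a,c) * X s(b,d)) := by
    have hX : ∀ x y : ι, (X s(x,y) : MvPolynomial (Sym2 ι) k)
        = Bz (E x) (E y) := fun x y => (Bz_single x y).symm
    rw [hX a b, hX c d, hX a c, hX b d]
    simp only [qS, Bz_add_left, Bz_add_right]
    rw [Bz_symm (E b) (E a), Bz_symm (E d) (E c), Bz_symm (E c) (E a),
      Bz_symm (E d) (E b), Bz_symm (E c) (E b)]
    rw [hC6]
    ring
  have hfin : (X s(a,b) * X s(c,d) - X s(a,c) * X s(b,d) : MvPolynomial (Sym2 ι) k)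
      = C ((6:k)⁻¹) * ((qS (E a + E b) (E c + E d) - qS (E a + E b) (E c) - qS (E a + E b) (E d)
      - qS (E a) (E c + E d) + qS (E a) (E c) + qS (E a) (E d)
      - qS (E b) (E c + E d) + qS (E b) (E c) + qS (E b) (E d))
      - (qS (E a + E c) (E b + E d) - qS (E a + E c) (E b) - qS (E a + E c) (E d)
      - qS (E a) (E b + E d) + qS (E a) (E b) + qS (E a) (E d)
      - qS (E c) (E b + E d) + qS (E c) (E b) + qS (E c) (E d))) := by
    rw [hkey, ← mul_assoc, ← C_mul, inv_mul_cancel₀ h6, C_1, one_mul]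
  rw [hfin]
  exact Ideal.mul_mem_left _ _ hmem


/-- Over a field of characteristic `≠ 2, 3` (in particular of
characteristic zero), the homogeneous ideal of the second Veronese embedding of `P^n`,
i.e. the kernel of the map `z_{ij} ↦ x_i x_j`, is generated by its quadrics of rank `3`. -/
theorem veronese_ideal_generated_by_rank_three_quadrics
    (n : ℕ) (h2 : (2 : k) ≠ 0) (h3 : (3 : k) ≠ 0) :
    RingHom.ker (veronese (k := k) n) =
      Ideal.span {q : MvPolynomial (Sym2 (Fin (n + 1))) k |
        q.IsHomogeneous 2 ∧ q ∈ RingHom.ker (veronese (k := k) n) ∧ RankThree q} := by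
  apply le_antisymm
  · intro p hp
    have h1 : p ∈ Ideal.span (minorSet k (Fin (n+1))) := by
      apply ker_le_span_minorSet
      rw [veronese_eq] at hp
      exact hp
    refine Ideal.span_le.2 ?_ h1
    rintro q ⟨a, b, c, d, rfl⟩
    exact minor_mem_ideal h2 h3 _ (qS_mem_span h2 n) a b c d
  · rw [Ideal.span_le]
    intro q hq
    exact hq.2.1


end Stmt13
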